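/- For every m ≥ 0 and r ≥ 0, a_{m+r+1,r} = Σ_{x=0}^{2m} C(r, x) · c_{m,x}, where C(r, x) = 0 for x > r. -/
import Mathlib


/-- A Ferrers diagram in `ℕ^k`: a finite nonempty downward-closed subset of `Fin k → ℕ`. -/
def IsFerrers {k : ℕ} (F : Finset (Fin k → ℕ)) : Prop :=
  F.Nonempty ∧ ∀ a ∈ F, ∀ x : Fin k → ℕ, (∀ i, x i ≤ a i) → x ∈ F

/-- A Ferrers diagram is strict if every coordinate is used by some element. -/
def IsStrict {k : ℕ} (F : Finset (Fin k → ℕ)) : Prop :=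
  ∀ i : Fin k, ∃ a ∈ F, a i ≠ 0

/-- `numPart d n` = `p_d(n)`, the number of Ferrers diagrams in `ℕ^(d+1)` with `n` elements. -/
noncomputable def numPart (d n : ℕ) : ℕ :=
  Nat.card {F : Finset (Fin (d + 1) → ℕ) // IsFerrers F ∧ F.card = n}

/-- `Amat n r` = `a_{n,r}`, the number of strict Ferrers diagrams in `ℕ^r` with `n` elements. -/
noncomputable def Amat (n r : ℕ) : ℕ :=
  Nat.card {F : Finset (Fin r → ℕ) // IsFerrers F ∧ IsStrict F ∧ F.card = n}

/-- `mu r` = `μ_r = {0, e_1, …, e_r} ⊆ ℕ^r`. -/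
def mu (r : ℕ) : Finset (Fin r → ℕ) :=
  insert 0 (Finset.univ.image fun i => Pi.single i 1)

/-- The reduced dimension of a Ferrers diagram `F ⊆ ℕ^x` (containing `μ_x`): the number of
coordinates used by some element of `F \ μ_x`. -/
noncomputable def rdim {x : ℕ} (F : Finset (Fin x → ℕ)) : ℕ :=
  Nat.card {i : Fin x // ∃ a ∈ F \ mu x, a i ≠ 0}

/-- Two coordinates are touched by a common element of the skew diagram `σ`. -/
def Touches {x : ℕ} (σ : Finset (Fin x → ℕ)) (i j : Fin x) : Prop :=
  ∃ a ∈ σ, a i ≠ 0 ∧ a j ≠ 0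

/-- `B` is a block of the finest partition of `Fin x` compatible with `σ`,
i.e. an equivalence class of the equivalence relation generated by `Touches σ`. -/
def IsBlock {x : ℕ} (σ : Finset (Fin x → ℕ)) (B : Set (Fin x)) : Prop :=
  ∃ i : Fin x, B = {j | Relation.EqvGen (Touches σ) i j}

/-- The support of `a` is contained in `B`. -/
def SuppIn {x : ℕ} (a : Fin x → ℕ) (B : Set (Fin x)) : Prop :=
  ∀ i, a i ≠ 0 → i ∈ B

/-- The component of `σ` with block `B` is of type `σ₂`: `B = {i, j}` with `i ≠ j`, and the
elements of `σ` supported in `B` are exactly `{e_i + e_j}`. -/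
def IsSigma2 {x : ℕ} (σ : Finset (Fin x → ℕ)) (B : Set (Fin x)) : Prop :=
  ∃ i j : Fin x, i ≠ j ∧ B = {i, j} ∧
    {a ∈ (σ : Set (Fin x → ℕ)) | SuppIn a B} = {Pi.single i 1 + Pi.single j 1}

/-- `Cmat m x` = `c_{m,x}`. -/
noncomputable def Cmat (m x : ℕ) : ℕ :=
  Nat.card {F : Finset (Fin x → ℕ) //
    IsFerrers F ∧ mu x ⊆ F ∧ F.card = m + x + 1 ∧ rdim F = x}

/-- `Dmat m x` = `d_{m,x}`. -/
noncomputable def Dmat (m x : ℕ) : ℕ :=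
  Nat.card {F : Finset (Fin x → ℕ) //
    IsFerrers F ∧ mu x ⊆ F ∧ F.card = m + x + 1 ∧ rdim F = x ∧
      ∀ B : Set (Fin x), IsBlock (F \ mu x) B → ¬ IsSigma2 (F \ mu x) B}

/-- A point of type 1: `e_i + e_j` for some `i ≠ j`. -/
def IsType1 {r : ℕ} (a : Fin r → ℕ) : Prop :=
  ∃ i j : Fin r, i ≠ j ∧ a = Pi.single i 1 + Pi.single j 1

/-- A point of type 2: `2·e_i` for some `i`. -/
def IsType2 {r : ℕ} (a : Fin r → ℕ) : Prop :=
  ∃ i : Fin r, a = Pi.single i 2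

/-- `Fmat n r` = `f_{n,r}`. -/
noncomputable def Fmat (n r : ℕ) : ℕ :=
  Nat.card {F : Finset (Fin r → ℕ) //
    IsFerrers F ∧ mu r ⊆ F ∧ F.card = n ∧
      ∀ B : Set (Fin r), IsBlock (F \ mu r) B →
        ∃ a ∈ F \ mu r, SuppIn a B ∧ ¬ IsType1 a}

section AUX
open Finset


section basics
variable {r : ℕ}

lemma single_eq_single_iff {i j : Fin r} : (Pi.single i 1 : Fin r → ℕ) = Pi.single j 1 ↔ i = j := by
  constructor
  · intro h
    by_contra hne
    have := congrFun h i
    simp [Pi.single_apply, hne] at this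
  · rintro rfl; rfl

lemma single_ne_zero' (i : Fin r) : (Pi.single i 1 : Fin r → ℕ) ≠ 0 := by
  intro h
  have := congrFun h i
  simp at this

lemma mem_mu_iff {a : Fin r → ℕ} : a ∈ mu r ↔ a = 0 ∨ ∃ i, a = Pi.single i 1 := by
  simp [mu, eq_comm]

lemma card_mu (r : ℕ) : (mu r).card = r + 1 := by
  have hinj : Function.Injective (fun i : Fin r => (Pi.single i 1 : Fin r → ℕ)) :=
    fun i j h => single_eq_single_iff.1 h
  rw [mu, card_insert_of_notMem, card_image_of_injective _ hinj, card_univ, Fintype.card_fin]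
  simp only [mem_image, mem_univ, true_and]
  rintro ⟨i, hi⟩
  exact single_ne_zero' i hi

end basics


section liftrestr
variable {r : ℕ} (S : Finset (Fin r))

/-- order iso Fin S.card ≃ S -/
noncomputable def oe : Fin S.card ≃o {x // x ∈ S} := S.orderIsoOfFin rfl

noncomputable def restr (a : Fin r → ℕ) : Fin S.card → ℕ := fun j => a (oe S j)

noncomputable def liftS (b : Fin S.card → ℕ) : Fin r → ℕ :=
  fun i => if h : i ∈ S then b ((oe S).symm ⟨i, h⟩) else 0

variable {S}

lemma liftS_apply_mem {b : Fin S.card → ℕ} {i : Fin r} (h : i ∈ S) :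
    liftS S b i = b ((oe S).symm ⟨i, h⟩) := dif_pos h

lemma liftS_apply_notMem {b : Fin S.card → ℕ} {i : Fin r} (h : i ∉ S) :
    liftS S b i = 0 := dif_neg h

lemma restr_liftS (b : Fin S.card → ℕ) : restr S (liftS S b) = b := by
  funext j
  have h : ((oe S j : {x // x ∈ S}) : Fin r) ∈ S := (oe S j).2
  rw [restr, liftS_apply_mem h]
  congr 1
  rw [show (⟨(oe S j : {x // x ∈ S}), h⟩ : {x // x ∈ S}) = oe S j from rfl]
  exact (oe S).symm_apply_apply j

lemma liftS_restr {a : Fin r → ℕ} (ha : ∀ i, a i ≠ 0 → i ∈ S) : liftS S (restr S a) = a := by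
  funext i
  by_cases h : i ∈ S
  · rw [liftS_apply_mem h, restr]
    congr 1
    exact congrArg _ ((oe S).apply_symm_apply ⟨i, h⟩)
  · rw [liftS_apply_notMem h]
    by_contra hne
    exact h (ha i (Ne.symm hne))

lemma liftS_injective : Function.Injective (liftS S) := by
  intro b c h
  rw [← restr_liftS (S := S) b, h, restr_liftS]

lemma liftS_zero : liftS S 0 = 0 := by
  funext i; by_cases h : i ∈ S
  · rw [liftS_apply_mem h]; rfl
  · rw [liftS_apply_notMem h]; rfl

lemma restr_zero : restr S (0 : Fin r → ℕ) = 0 := rfl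

lemma restr_single {i : Fin r} (h : i ∈ S) (n : ℕ) :
    restr S (Pi.single i n) = Pi.single ((oe S).symm ⟨i, h⟩) n := by
  funext j
  rw [restr]
  rcases eq_or_ne j ((oe S).symm ⟨i, h⟩) with rfl | hne
  · rw [(oe S).apply_symm_apply]
    simp [Pi.single_apply]
  · have h2 : ((oe S j : {x // x ∈ S}) : Fin r) ≠ i := by
      intro hc
      apply hne
      have h3 : oe S j = (⟨i, h⟩ : {x // x ∈ S}) := Subtype.ext hc
      rw [← h3, (oe S).symm_apply_apply]
    simp [Pi.single_apply, h2, hne]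

lemma single_supp {i : Fin r} (h : i ∈ S) (n : ℕ) :
    ∀ k, (Pi.single i n : Fin r → ℕ) k ≠ 0 → k ∈ S := by
  intro k hk
  rcases eq_or_ne k i with rfl | hne
  · exact h
  · simp [Pi.single_apply, hne] at hk

lemma liftS_single (j : Fin S.card) (n : ℕ) :
    liftS S (Pi.single j n) = Pi.single ((oe S j : {x // x ∈ S}) : Fin r) n := by
  have hmem : ((oe S j : {x // x ∈ S}) : Fin r) ∈ S := (oe S j).2
  have h1 : restr S (Pi.single ((oe S j : {x // x ∈ S}) : Fin r) n) = Pi.single j n := by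
    rw [restr_single hmem]
    have h4 : (⟨((oe S j : {x // x ∈ S}) : Fin r), hmem⟩ : {x // x ∈ S}) = oe S j := Subtype.ext rfl
    rw [h4, (oe S).symm_apply_apply]
  rw [← h1, liftS_restr (single_supp hmem n)]

lemma liftS_mono {b c : Fin S.card → ℕ} (h : ∀ j, b j ≤ c j) : ∀ i, liftS S b i ≤ liftS S c i := by
  intro i
  by_cases hi : i ∈ S
  · rw [liftS_apply_mem hi, liftS_apply_mem hi]; exact h _
  · rw [liftS_apply_notMem hi]; exact Nat.zero_le _

lemma liftS_le_of_le {y : Fin r → ℕ} {a : Fin r → ℕ} (hy : ∀ i, y i ≤ a i) :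
    ∀ i, liftS S (restr S y) i ≤ a i := by
  intro i
  by_cases hi : i ∈ S
  · rw [liftS_apply_mem hi, restr]
    rw [(oe S).apply_symm_apply ⟨i, hi⟩]
    exact hy i
  · rw [liftS_apply_notMem hi]; exact Nat.zero_le _

end liftrestr

section ferrersbasics
variable {r : ℕ} {F : Finset (Fin r → ℕ)}

lemma ferrers_zero_mem (hF : IsFerrers F) : (0 : Fin r → ℕ) ∈ F := by
  obtain ⟨a, ha⟩ := hF.1
  exact hF.2 a ha 0 (fun i => Nat.zero_le _)

lemma mu_subset_of_strict (hF : IsFerrers F) (hS : IsStrict F) : mu r ⊆ F := by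
  intro b hb
  rcases mem_mu_iff.1 hb with rfl | ⟨i, rfl⟩
  · exact ferrers_zero_mem hF
  · obtain ⟨a, haF, hai⟩ := hS i
    refine hF.2 a haF _ (fun j => ?_)
    rcases eq_or_ne j i with rfl | hne
    · simpa [Pi.single_apply] using Nat.one_le_iff_ne_zero.2 hai
    · simp [Pi.single_apply, hne]

lemma card_sdiff_mu (hmu : mu r ⊆ F) {n : ℕ} (hc : F.card = n + r + 1) :
    (F \ mu r).card = n := by
  rw [card_sdiff_of_subset hmu, hc, card_mu]
  omega

lemma rdim_eq_of_forall {x : ℕ} {F : Finset (Fin x → ℕ)}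
    (h : ∀ i : Fin x, ∃ a ∈ F \ mu x, a i ≠ 0) : rdim F = x := by
  rw [rdim, Nat.card_congr (Equiv.subtypeUnivEquiv h), Nat.card_eq_fintype_card,
    Fintype.card_fin]

lemma forall_of_rdim {x : ℕ} {F : Finset (Fin x → ℕ)} (h : rdim F = x) (i : Fin x) :
    ∃ a ∈ F \ mu x, a i ≠ 0 := by
  have h2 : ({i : Fin x | ∃ a ∈ F \ mu x, a i ≠ 0} : Set (Fin x)).ncard = x := by
    rw [← Nat.card_coe_set_eq]; exact h
  have h3 : ({i : Fin x | ∃ a ∈ F \ mu x, a i ≠ 0} : Set (Fin x)) = Set.univ := by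
    apply Set.eq_of_subset_of_ncard_le (Set.subset_univ _)
    rw [h2, Set.ncard_univ, Nat.card_eq_fintype_card, Fintype.card_fin]
  have := Set.eq_univ_iff_forall.mp h3 i
  exact this

lemma ferrers_entry_lt {k n : ℕ} {F : Finset (Fin k → ℕ)} (hF : IsFerrers F)
    (hc : F.card = n) {a : Fin k → ℕ} (ha : a ∈ F) (i : Fin k) : a i < n := by
  have hsub : (Finset.range (a i + 1)).image (fun t => (Pi.single i t : Fin k → ℕ)) ⊆ F := by
    intro b hb
    simp only [mem_image, mem_range] at hb
    obtain ⟨t, ht, rfl⟩ := hb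
    refine hF.2 a ha _ (fun j => ?_)
    rcases eq_or_ne j i with rfl | hne
    · simpa [Pi.single_apply] using Nat.lt_succ_iff.mp ht
    · simp [Pi.single_apply, hne]
  have hinj : Function.Injective (fun t => (Pi.single i t : Fin k → ℕ)) := by
    intro s t h
    simpa using congrFun h i
  have := Finset.card_le_card hsub
  rw [Finset.card_image_of_injective _ hinj, Finset.card_range, hc] at this
  omega

lemma ferrers_finite (k n : ℕ) :
    {F : Finset (Fin k → ℕ) | IsFerrers F ∧ F.card = n}.Finite := by
  apply Set.Finite.subset ((Fintype.piFinset fun _ : Fin k => Finset.range n).powerset).finite_toSet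
  intro F hF
  simp only [Set.mem_setOf_eq] at hF
  simp only [coe_powerset, Set.mem_preimage, Set.mem_powerset_iff]
  intro a ha
  simp only [mem_coe, Fintype.mem_piFinset, mem_range]
  exact fun i => ferrers_entry_lt hF.1 hF.2 ha i

lemma sum_le_one_of_mem_mu {a : Fin r → ℕ} (h : a ∈ mu r) : ∑ i, a i ≤ 1 := by
  rcases mem_mu_iff.1 h with rfl | ⟨i, rfl⟩
  · simp
  · rw [Finset.sum_eq_single i (fun j _ hj => by simp [Pi.single_apply, hj]) (by simp)]
    simp

lemma exists_weight_two {x : ℕ} {F : Finset (Fin x → ℕ)} (hF : IsFerrers F)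
    {a : Fin x → ℕ} (ha : a ∈ F \ mu x) {i : Fin x} (hai : a i ≠ 0) :
    ∃ b ∈ F \ mu x, (∑ j, b j = 2) ∧ b i ≠ 0 := by
  obtain ⟨haF, hamu⟩ := Finset.mem_sdiff.1 ha
  by_cases h2 : 2 ≤ a i
  · refine ⟨Pi.single i 2, ?_, ?_, by simp⟩
    · rw [Finset.mem_sdiff]
      constructor
      · refine hF.2 a haF _ (fun j => ?_)
        rcases eq_or_ne j i with rfl | hne
        · simpa [Pi.single_apply] using h2
        · simp [Pi.single_apply, hne]
      · intro hb
        have := sum_le_one_of_mem_mu hb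
        rw [Finset.sum_eq_single i (fun j _ hj => by simp [Pi.single_apply, hj]) (by simp)] at this
        simp at this
    · rw [Finset.sum_eq_single i (fun j _ hj => by simp [Pi.single_apply, hj]) (by simp)]
      simp
  · -- a i = 1, need another coordinate
    have hai1 : a i = 1 := by omega
    have hsum : 2 ≤ ∑ j, a j := by
      by_contra hlt
      push_neg at hlt
      interval_cases h : ∑ j, a j
      · have : a = 0 := by
          funext j
          exact Finset.sum_eq_zero_iff.mp h j (mem_univ j)
        exact hamu (this ▸ mem_mu_iff.2 (Or.inl rfl))
      · -- sum = 1 and a i = 1 forces a = single i 1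
        have hall : ∀ j, j ≠ i → a j = 0 := by
          intro j hj
          have h1 : a i + a j ≤ ∑ k, a k := by
            rw [← Finset.sum_pair (Ne.symm hj)]
            exact Finset.sum_le_sum_of_subset (by intro z _; exact mem_univ z)
          omega
        have : a = Pi.single i 1 := by
          funext j
          rcases eq_or_ne j i with rfl | hj
          · simpa [Pi.single_apply] using hai1
          · simp [Pi.single_apply, hj, hall j hj]
        exact hamu (this ▸ mem_mu_iff.2 (Or.inr ⟨i, rfl⟩))
    have hone : ∃ j, j ≠ i ∧ a j ≠ 0 := by
      by_contra hc
      push_neg at hc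
      have : ∑ j, a j = a i := by
        rw [Finset.sum_eq_single i (fun j _ hj => hc j hj) (by simp)]
      omega
    obtain ⟨j, hji, haj⟩ := hone
    refine ⟨Pi.single i 1 + Pi.single j 1, ?_, ?_, ?_⟩
    · rw [Finset.mem_sdiff]
      constructor
      · refine hF.2 a haF _ (fun k => ?_)
        rcases eq_or_ne k i with rfl | hki
        · simp [Pi.single_apply, Ne.symm hji, hai1]
        · rcases eq_or_ne k j with rfl | hkj
          · simp [Pi.single_apply, hki]
            omega
          · simp [Pi.single_apply, hki, hkj]
      · intro hb
        have := sum_le_one_of_mem_mu hb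
        simp only [Pi.add_apply] at this
        rw [Finset.sum_add_distrib] at this
        rw [Finset.sum_eq_single i (fun k _ hk => by simp [Pi.single_apply, hk]) (by simp),
          Finset.sum_eq_single j (fun k _ hk => by simp [Pi.single_apply, hk]) (by simp)] at this
        simp at this
    · simp only [Pi.add_apply]
      rw [Finset.sum_add_distrib,
        Finset.sum_eq_single i (fun k _ hk => by simp [Pi.single_apply, hk]) (by simp),
        Finset.sum_eq_single j (fun k _ hk => by simp [Pi.single_apply, hk]) (by simp)]
      simp
    · simp [Pi.single_apply, Ne.symm hji]

lemma rdim_le_two_mul {m x : ℕ} {F : Finset (Fin x → ℕ)} (hF : IsFerrers F)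
    (hmu : mu x ⊆ F) (hc : F.card = m + x + 1) (hr : rdim F = x) : x ≤ 2 * m := by
  classical
  set T := (F \ mu x).filter (fun a => ∑ j, a j = 2) with hT
  have hcov : (Finset.univ : Finset (Fin x)) ⊆ T.biUnion (fun b => univ.filter (fun i => b i ≠ 0)) := by
    intro i _
    obtain ⟨a, ha, hai⟩ := forall_of_rdim hr i
    obtain ⟨b, hb, hb2, hbi⟩ := exists_weight_two hF ha hai
    exact Finset.mem_biUnion.2 ⟨b, Finset.mem_filter.2 ⟨hb, hb2⟩, Finset.mem_filter.2 ⟨mem_univ i, hbi⟩⟩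
  have hx : x ≤ (T.biUnion (fun b => univ.filter (fun i => b i ≠ 0))).card := by
    calc x = (Finset.univ : Finset (Fin x)).card := by rw [card_univ, Fintype.card_fin]
    _ ≤ _ := Finset.card_le_card hcov
  have hbound : ∀ b ∈ T, (univ.filter (fun i => b i ≠ 0)).card ≤ 2 := by
    intro b hb
    have hb2 : ∑ j, b j = 2 := (Finset.mem_filter.1 hb).2
    have h1 : (univ.filter (fun i => b i ≠ 0)).card • 1 ≤ ∑ i ∈ univ.filter (fun i => b i ≠ 0), b i :=
      Finset.card_nsmul_le_sum _ _ _ (fun i hi => Nat.one_le_iff_ne_zero.2 (Finset.mem_filter.1 hi).2)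
    have h2 : ∑ i ∈ univ.filter (fun i => b i ≠ 0), b i ≤ ∑ i, b i :=
      Finset.sum_le_sum_of_subset (Finset.filter_subset _ _)
    simp only [smul_eq_mul, mul_one] at h1
    exact le_trans h1 (le_trans h2 hb2.le)
  have h3 : (T.biUnion (fun b => univ.filter (fun i => b i ≠ 0))).card ≤ ∑ b ∈ T, (univ.filter (fun i => b i ≠ 0)).card :=
    Finset.card_biUnion_le
  have h4 : ∑ b ∈ T, (univ.filter (fun i => b i ≠ 0)).card ≤ ∑ b ∈ T, 2 :=
    Finset.sum_le_sum hbound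
  have h5 : T.card ≤ m := by
    have : T ⊆ F \ mu x := Finset.filter_subset _ _
    have := Finset.card_le_card this
    rw [card_sdiff_mu hmu hc] at this
    exact this
  rw [Finset.sum_const, smul_eq_mul] at h4
  have h6 : x ≤ T.card * 2 := le_trans hx (le_trans h3 h4)
  have h7 : T.card * 2 ≤ m * 2 := Nat.mul_le_mul_right 2 h5
  calc x ≤ T.card * 2 := h6
    _ ≤ m * 2 := h7
    _ = 2 * m := Nat.mul_comm _ _

lemma cmat_eq_zero {m x : ℕ} (h : 2 * m < x) : Cmat m x = 0 := by
  rw [Cmat]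
  have : IsEmpty {F : Finset (Fin x → ℕ) //
      IsFerrers F ∧ mu x ⊆ F ∧ F.card = m + x + 1 ∧ rdim F = x} := by
    constructor
    rintro ⟨F, hF, hmu, hc, hr⟩
    exact absurd (rdim_le_two_mul hF hmu hc hr) (by omega)
  exact Nat.card_of_isEmpty

end ferrersbasics

section mainbij
open scoped Classical

variable {r : ℕ} {S : Finset (Fin r)}

lemma liftS_le {y : Fin S.card → ℕ} {a : Fin r → ℕ} (h : ∀ j, y j ≤ restr S a j) :
    ∀ i, liftS S y i ≤ a i := by
  intro i
  by_cases hi : i ∈ S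
  · rw [liftS_apply_mem hi]
    have h2 := h ((oe S).symm ⟨i, hi⟩)
    rw [restr, (oe S).apply_symm_apply] at h2
    exact h2
  · rw [liftS_apply_notMem hi]; exact Nat.zero_le _

lemma restr_le {y : Fin r → ℕ} {b : Fin S.card → ℕ} (h : ∀ i, y i ≤ liftS S b i) :
    ∀ j, restr S y j ≤ b j := by
  intro j
  have h2 := h ((oe S j : {x // x ∈ S}) : Fin r)
  rw [liftS_apply_mem (oe S j).2] at h2
  rw [restr]
  convert h2 using 2
  rw [show (⟨((oe S j : {x // x ∈ S}) : Fin r), (oe S j).2⟩ : {x // x ∈ S}) = oe S j from Subtype.ext rfl,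
    (oe S).symm_apply_apply]

lemma restr_single_oe (j : Fin S.card) (n : ℕ) :
    restr S (Pi.single ((oe S j : {x // x ∈ S}) : Fin r) n) = Pi.single j n := by
  rw [restr_single (oe S j).2]
  rw [show (⟨((oe S j : {x // x ∈ S}) : Fin r), (oe S j).2⟩ : {x // x ∈ S}) = oe S j from Subtype.ext rfl,
    (oe S).symm_apply_apply]

lemma le_single_one {y : Fin r → ℕ} {i : Fin r} (h : ∀ k, y k ≤ (Pi.single i 1 : Fin r → ℕ) k) :
    y = 0 ∨ y = Pi.single i 1 := by
  by_cases hy : y i = 0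
  · left
    funext k
    rcases eq_or_ne k i with rfl | hk
    · exact hy
    · have := h k
      simpa [Pi.single_apply, hk] using this
  · right
    funext k
    rcases eq_or_ne k i with rfl | hk
    · have h2 := h k
      simp only [Pi.single_eq_same] at h2 ⊢
      omega
    · have := h k
      simpa [Pi.single_apply, hk] using this

/-- Forward map: restrict to coordinates in `S`. -/
noncomputable def fwd (S : Finset (Fin r)) (F : Finset (Fin r → ℕ)) : Finset (Fin S.card → ℕ) :=
  (F.filter fun a => ∀ i, a i ≠ 0 → i ∈ S).image (restr S)

/-- Backward map: lift and add the missing unit vectors. -/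
noncomputable def bwd (S : Finset (Fin r)) (F' : Finset (Fin S.card → ℕ)) : Finset (Fin r → ℕ) :=
  F'.image (liftS S) ∪ Sᶜ.image fun i => Pi.single i 1

/-- Support of the skew part. -/
noncomputable def suppS (F : Finset (Fin r → ℕ)) : Finset (Fin r) :=
  univ.filter fun i => ∃ a ∈ F \ mu r, a i ≠ 0

lemma mem_suppS {F : Finset (Fin r → ℕ)} {i : Fin r} :
    i ∈ suppS F ↔ ∃ a ∈ F \ mu r, a i ≠ 0 := by
  simp [suppS]

end mainbij

section fwdlemmas
open scoped Classical
variable {m r : ℕ} {S : Finset (Fin r)} {F : Finset (Fin r → ℕ)}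

lemma suppS_prop1 (hsupp : suppS F = S) :
    ∀ a ∈ F \ mu r, ∀ i, a i ≠ 0 → i ∈ S := by
  intro a ha i hi
  rw [← hsupp]
  exact mem_suppS.2 ⟨a, ha, hi⟩

lemma suppS_prop2 (hsupp : suppS F = S) :
    ∀ i ∈ S, ∃ a ∈ F \ mu r, a i ≠ 0 := by
  intro i hi
  rw [← hsupp] at hi
  exact mem_suppS.1 hi

lemma filter_decomp (hmuF : mu r ⊆ F) (hs1 : ∀ a ∈ F \ mu r, ∀ i, a i ≠ 0 → i ∈ S) :
    F.filter (fun a => ∀ i, a i ≠ 0 → i ∈ S)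
      = (F \ mu r) ∪ insert 0 (S.image fun i => Pi.single i 1) := by
  ext a
  simp only [mem_filter, mem_union, mem_sdiff, mem_insert, mem_image]
  constructor
  · rintro ⟨haF, hsp⟩
    by_cases hm : a ∈ mu r
    · rcases mem_mu_iff.1 hm with rfl | ⟨i, rfl⟩
      · right; left; rfl
      · right; right
        exact ⟨i, hsp i (by simp), rfl⟩
    · left; exact ⟨haF, hm⟩
  · rintro (⟨haF, hm⟩ | rfl | ⟨i, hiS, rfl⟩)
    · exact ⟨haF, hs1 a (mem_sdiff.2 ⟨haF, hm⟩)⟩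
    · exact ⟨hmuF (mem_mu_iff.2 (Or.inl rfl)), fun i hi => absurd rfl hi⟩
    · exact ⟨hmuF (mem_mu_iff.2 (Or.inr ⟨i, rfl⟩)), single_supp hiS 1⟩

lemma filter_decomp_card (hmuF : mu r ⊆ F) (hc : F.card = m + r + 1)
    (hs1 : ∀ a ∈ F \ mu r, ∀ i, a i ≠ 0 → i ∈ S) :
    (F.filter (fun a => ∀ i, a i ≠ 0 → i ∈ S)).card = m + S.card + 1 := by
  rw [filter_decomp hmuF hs1, Finset.card_union_of_disjoint, card_sdiff_mu hmuF hc,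
    card_insert_of_notMem, card_image_of_injective _ (fun i j h => single_eq_single_iff.1 h)]
  · omega
  · simp only [mem_image]
    rintro ⟨i, _, hi⟩
    exact single_ne_zero' i hi
  · rw [Finset.disjoint_left]
    intro a ha hb
    have : a ∈ mu r := by
      rcases mem_insert.1 hb with rfl | hb2
      · exact mem_mu_iff.2 (Or.inl rfl)
      · obtain ⟨i, _, rfl⟩ := mem_image.1 hb2
        exact mem_mu_iff.2 (Or.inr ⟨i, rfl⟩)
    exact (mem_sdiff.1 ha).2 this

lemma restr_injOn : Set.InjOn (restr S)
    ↑(F.filter (fun a => ∀ i, a i ≠ 0 → i ∈ S)) := by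
  intro a ha b hb h
  simp only [coe_filter, Set.mem_setOf_eq] at ha hb
  rw [← liftS_restr ha.2, h, liftS_restr hb.2]

lemma fwd_card (hmuF : mu r ⊆ F) (hc : F.card = m + r + 1)
    (hs1 : ∀ a ∈ F \ mu r, ∀ i, a i ≠ 0 → i ∈ S) :
    (fwd S F).card = m + S.card + 1 := by
  rw [fwd, Finset.card_image_of_injOn restr_injOn, filter_decomp_card hmuF hc hs1]

lemma fwd_ferrers (hF : IsFerrers F) : IsFerrers (fwd S F) := by
  constructor
  · refine ⟨0, ?_⟩
    rw [fwd, mem_image]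
    exact ⟨0, mem_filter.2 ⟨ferrers_zero_mem hF, fun i hi => absurd rfl hi⟩, rfl⟩
  · intro b hb y hy
    rw [fwd, mem_image] at hb
    obtain ⟨a, ha, rfl⟩ := hb
    rw [mem_filter] at ha
    have hlift : liftS S y ∈ F := hF.2 a ha.1 _ (liftS_le hy)
    rw [fwd, mem_image]
    refine ⟨liftS S y, mem_filter.2 ⟨hlift, ?_⟩, restr_liftS y⟩
    intro i hi
    by_contra hiS
    exact hi (liftS_apply_notMem hiS)

lemma fwd_mu (hF : IsFerrers F) (hmuF : mu r ⊆ F) : mu S.card ⊆ fwd S F := by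
  intro b hb
  rcases mem_mu_iff.1 hb with rfl | ⟨j, rfl⟩
  · rw [fwd, mem_image]
    exact ⟨0, mem_filter.2 ⟨ferrers_zero_mem hF, fun i hi => absurd rfl hi⟩, rfl⟩
  · rw [fwd, mem_image]
    refine ⟨Pi.single ((oe S j : {x // x ∈ S}) : Fin r) 1,
      mem_filter.2 ⟨hmuF (mem_mu_iff.2 (Or.inr ⟨_, rfl⟩)), single_supp (oe S j).2 1⟩,
      restr_single_oe j 1⟩

lemma restr_notMem_mu {a : Fin r → ℕ} (haF : a ∉ mu r) (hsp : ∀ i, a i ≠ 0 → i ∈ S) :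
    restr S a ∉ mu S.card := by
  intro hm
  rcases mem_mu_iff.1 hm with h0 | ⟨j, hj⟩
  · apply haF
    have : a = liftS S (restr S a) := (liftS_restr hsp).symm
    rw [this, h0, liftS_zero]
    exact mem_mu_iff.2 (Or.inl rfl)
  · apply haF
    have : a = liftS S (restr S a) := (liftS_restr hsp).symm
    rw [this, hj, liftS_single]
    exact mem_mu_iff.2 (Or.inr ⟨_, rfl⟩)

lemma fwd_rdim (hmuF : mu r ⊆ F) (hsupp : suppS F = S) : rdim (fwd S F) = S.card := by
  apply rdim_eq_of_forall
  intro j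
  obtain ⟨a, ha, haj⟩ := suppS_prop2 hsupp ((oe S j : {x // x ∈ S}) : Fin r) (oe S j).2
  have hsd := mem_sdiff.1 ha
  have hsp : ∀ i, a i ≠ 0 → i ∈ S := suppS_prop1 hsupp a ha
  refine ⟨restr S a, mem_sdiff.2 ⟨?_, restr_notMem_mu hsd.2 hsp⟩, ?_⟩
  · rw [fwd, mem_image]
    exact ⟨a, mem_filter.2 ⟨hsd.1, hsp⟩, rfl⟩
  · exact haj

end fwdlemmas

section bwdlemmas
open scoped Classical
variable {m r : ℕ} {S : Finset (Fin r)} {F' : Finset (Fin S.card → ℕ)}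

lemma liftS_supp (b : Fin S.card → ℕ) : ∀ i, liftS S b i ≠ 0 → i ∈ S := by
  intro i hi
  by_contra h
  exact hi (liftS_apply_notMem h)

lemma bwd_ferrers (hF' : IsFerrers F') : IsFerrers (bwd S F') := by
  constructor
  · refine ⟨0, ?_⟩
    rw [bwd, mem_union, mem_image]
    exact Or.inl ⟨0, ferrers_zero_mem hF', liftS_zero⟩
  · intro a ha y hy
    rw [bwd, mem_union, mem_image] at ha
    rcases ha with ⟨b, hb, rfl⟩ | ha
    · have h1 : restr S y ∈ F' := hF'.2 b hb _ (restr_le hy)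
      have h2 : ∀ i, y i ≠ 0 → i ∈ S := by
        intro i hi
        apply liftS_supp b
        have := hy i
        omega
      rw [bwd, mem_union, mem_image]
      exact Or.inl ⟨restr S y, h1, liftS_restr h2⟩
    · obtain ⟨i, hiS, rfl⟩ := mem_image.1 ha
      rcases le_single_one hy with rfl | rfl
      · rw [bwd, mem_union, mem_image]
        exact Or.inl ⟨0, ferrers_zero_mem hF', liftS_zero⟩
      · rw [bwd, mem_union]
        exact Or.inr (mem_image.2 ⟨i, hiS, rfl⟩)

lemma bwd_strict (hmu' : mu S.card ⊆ F') : IsStrict (bwd S F') := by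
  intro i
  by_cases hi : i ∈ S
  · refine ⟨liftS S (Pi.single ((oe S).symm ⟨i, hi⟩) 1), ?_, ?_⟩
    · rw [bwd, mem_union, mem_image]
      exact Or.inl ⟨_, hmu' (mem_mu_iff.2 (Or.inr ⟨_, rfl⟩)), rfl⟩
    · rw [liftS_apply_mem hi]
      simp
  · refine ⟨Pi.single i 1, ?_, by simp⟩
    rw [bwd, mem_union]
    exact Or.inr (mem_image.2 ⟨i, by simpa using hi, rfl⟩)

lemma bwd_card (hc' : F'.card = m + S.card + 1) : (bwd S F').card = m + r + 1 := by
  have hdisj : Disjoint (F'.image (liftS S)) (Sᶜ.image fun i => Pi.single i 1) := by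
    rw [Finset.disjoint_left]
    rintro a ha hb
    obtain ⟨b, _, rfl⟩ := mem_image.1 ha
    obtain ⟨i, hiS, hsingle⟩ := mem_image.1 hb
    rw [mem_compl] at hiS
    have h1 : liftS S b i = 0 := liftS_apply_notMem hiS
    have h2 : liftS S b i = 1 := by rw [← hsingle]; simp
    omega
  rw [bwd, Finset.card_union_of_disjoint hdisj,
    card_image_of_injective _ liftS_injective,
    card_image_of_injective _ (fun i j h => single_eq_single_iff.1 h), hc',
    Finset.card_compl]
  have := Finset.card_le_univ S
  rw [Fintype.card_fin] at *
  omega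

lemma bwd_sdiff_mu : bwd S F' \ mu r = (F' \ mu S.card).image (liftS S) := by
  ext a
  simp only [mem_sdiff, mem_image]
  constructor
  · rintro ⟨ha, hamu⟩
    rw [bwd, mem_union, mem_image] at ha
    rcases ha with ⟨b, hb, rfl⟩ | ha
    · refine ⟨b, ⟨⟨hb, ?_⟩, rfl⟩⟩
      intro hbmu
      apply hamu
      rcases mem_mu_iff.1 hbmu with rfl | ⟨j, rfl⟩
      · rw [liftS_zero]; exact mem_mu_iff.2 (Or.inl rfl)
      · rw [liftS_single]; exact mem_mu_iff.2 (Or.inr ⟨_, rfl⟩)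
    · obtain ⟨i, _, rfl⟩ := mem_image.1 ha
      exact absurd (mem_mu_iff.2 (Or.inr ⟨i, rfl⟩)) hamu
  · rintro ⟨b, hb, rfl⟩
    have hbs := hb
    constructor
    · rw [bwd, mem_union, mem_image]
      exact Or.inl ⟨b, hbs.1, rfl⟩
    · intro hmu
      rcases mem_mu_iff.1 hmu with h0 | ⟨i, hi⟩
      · apply hbs.2
        have : b = restr S (liftS S b) := (restr_liftS b).symm
        rw [this, h0, restr_zero]
        exact mem_mu_iff.2 (Or.inl rfl)
      · have hiS : i ∈ S := by
          apply liftS_supp b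
          rw [hi]
          simp
        apply hbs.2
        have : b = restr S (liftS S b) := (restr_liftS b).symm
        rw [this, hi, restr_single hiS]
        exact mem_mu_iff.2 (Or.inr ⟨_, rfl⟩)

lemma bwd_suppS (hr' : rdim F' = S.card) : suppS (bwd S F') = S := by
  ext i
  rw [mem_suppS]
  constructor
  · rintro ⟨a, ha, hai⟩
    rw [bwd_sdiff_mu] at ha
    obtain ⟨b, _, rfl⟩ := mem_image.1 ha
    exact liftS_supp b i hai
  · intro hi
    obtain ⟨b, hb, hbj⟩ := forall_of_rdim hr' ((oe S).symm ⟨i, hi⟩)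
    refine ⟨liftS S b, ?_, ?_⟩
    · rw [bwd_sdiff_mu, mem_image]
      exact ⟨b, hb, rfl⟩
    · rw [liftS_apply_mem hi]
      exact hbj

lemma left_inv_bij (hF : IsFerrers F) (hS : IsStrict F) (hsupp : suppS F = S) :
    bwd S (fwd S F) = F := by
  have hmuF : mu r ⊆ F := mu_subset_of_strict hF hS
  have hs1 := suppS_prop1 hsupp
  have himg : (fwd S F).image (liftS S) = F.filter (fun a => ∀ i, a i ≠ 0 → i ∈ S) := by
    rw [fwd, Finset.image_image]
    rw [show (liftS S ∘ restr S) = fun a => liftS S (restr S a) from rfl]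
    rw [Finset.image_congr (g := id), Finset.image_id]
    intro a ha
    simp only [coe_filter, Set.mem_setOf_eq] at ha
    exact liftS_restr ha.2
  rw [bwd, himg]
  ext a
  rw [mem_union, mem_filter, mem_image]
  constructor
  · rintro (⟨ha, _⟩ | ⟨i, hiS, rfl⟩)
    · exact ha
    · exact hmuF (mem_mu_iff.2 (Or.inr ⟨i, rfl⟩))
  · intro ha
    by_cases hsp : ∀ i, a i ≠ 0 → i ∈ S
    · exact Or.inl ⟨ha, hsp⟩
    · push_neg at hsp
      obtain ⟨i, hai, hiS⟩ := hsp
      right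
      have hamu : a ∈ mu r := by
        by_contra hmu
        exact hiS (hs1 a (mem_sdiff.2 ⟨ha, hmu⟩) i hai)
      rcases mem_mu_iff.1 hamu with rfl | ⟨j, rfl⟩
      · exact absurd rfl hai
      · have : j = i := by
          by_contra hji
          apply hai
          simp [Pi.single_apply, Ne.symm hji]
        subst this
        exact ⟨j, by simpa using hiS, rfl⟩

lemma right_inv_bij (hF' : IsFerrers F') (hmu' : mu S.card ⊆ F') : fwd S (bwd S F') = F' := by
  rw [fwd, bwd, Finset.filter_union]
  have h1 : (F'.image (liftS S)).filter (fun a => ∀ i, a i ≠ 0 → i ∈ S)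
      = F'.image (liftS S) := by
    apply Finset.filter_true_of_mem
    intro a ha
    obtain ⟨b, _, rfl⟩ := mem_image.1 ha
    exact liftS_supp b
  have h2 : ((Sᶜ.image fun i => Pi.single i 1).filter (fun a => ∀ i, a i ≠ 0 → i ∈ S))
      = ∅ := by
    rw [Finset.filter_eq_empty_iff]
    intro a ha
    obtain ⟨i, hiS, rfl⟩ := mem_image.1 ha
    rw [mem_compl] at hiS
    push_neg
    exact ⟨i, by simp, hiS⟩
  rw [h1, h2, union_empty, Finset.image_image]
  rw [show (restr S ∘ liftS S) = fun b => restr S (liftS S b) from rfl]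
  rw [Finset.image_congr (g := id), Finset.image_id]
  intro b _
  exact restr_liftS b

end bwdlemmas

section assembly
open scoped Classical

lemma nat_card_sigma {ι : Type} [Fintype ι] (f : ι → Type) [∀ i, Finite (f i)] :
    Nat.card (Σ i, f i) = ∑ i, Nat.card (f i) := by
  letI : ∀ i, Fintype (f i) := fun i => Fintype.ofFinite _
  simp [Nat.card_eq_fintype_card]

lemma card_fiber (m r : ℕ) (S : Finset (Fin r)) :
    Nat.card {F : Finset (Fin r → ℕ) //
        (IsFerrers F ∧ IsStrict F ∧ F.card = m + r + 1) ∧ suppS F = S}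
      = Cmat m S.card := by
  rw [Cmat]
  apply Nat.card_congr
  refine ⟨fun F => ⟨fwd S F.1, ?_⟩, fun F' => ⟨bwd S F'.1, ?_⟩, ?_, ?_⟩
  · obtain ⟨⟨hF, hS, hc⟩, hsupp⟩ := F.2
    have hmuF : mu r ⊆ F.1 := mu_subset_of_strict hF hS
    exact ⟨fwd_ferrers hF, fwd_mu hF hmuF,
      fwd_card hmuF hc (suppS_prop1 hsupp), fwd_rdim hmuF hsupp⟩
  · obtain ⟨hF', hmu', hc', hr'⟩ := F'.2
    exact ⟨⟨bwd_ferrers hF', bwd_strict hmu', bwd_card hc'⟩, bwd_suppS hr'⟩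
  · rintro ⟨F, ⟨hF, hS, hc⟩, hsupp⟩
    exact Subtype.ext (left_inv_bij hF hS hsupp)
  · rintro ⟨F', hF', hmu', hc', hr'⟩
    exact Subtype.ext (right_inv_bij hF' hmu')

lemma amat_eq_sum (m r : ℕ) :
    Amat (m + r + 1) r = ∑ S : Finset (Fin r), Cmat m S.card := by
  rw [Amat]
  have hfin : {F : Finset (Fin r → ℕ) | IsFerrers F ∧ IsStrict F ∧ F.card = m + r + 1}.Finite :=
    (ferrers_finite r (m + r + 1)).subset (fun F hF => ⟨hF.1, hF.2.2⟩)
  haveI : Finite {F : Finset (Fin r → ℕ) // IsFerrers F ∧ IsStrict F ∧ F.card = m + r + 1} :=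
    hfin.to_subtype
  rw [Nat.card_congr (Equiv.sigmaFiberEquiv
    (fun F : {F : Finset (Fin r → ℕ) // IsFerrers F ∧ IsStrict F ∧ F.card = m + r + 1} =>
      suppS F.1)).symm]
  rw [nat_card_sigma]
  refine Finset.sum_congr rfl (fun S _ => ?_)
  rw [← card_fiber m r S]
  exact Nat.card_congr (Equiv.subtypeSubtypeEquivSubtypeInter
    (fun F : Finset (Fin r → ℕ) => IsFerrers F ∧ IsStrict F ∧ F.card = m + r + 1)
    (fun F => suppS F = S))

lemma sum_over_sets (m r : ℕ) :
    ∑ S : Finset (Fin r), Cmat m S.card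
      = ∑ x ∈ Finset.range (r + 1), r.choose x * Cmat m x := by
  rw [show (Finset.univ : Finset (Finset (Fin r))) = (Finset.univ : Finset (Fin r)).powerset from
    Finset.powerset_univ.symm]
  rw [Finset.sum_powerset]
  rw [Finset.card_univ, Fintype.card_fin]
  refine Finset.sum_congr rfl (fun x _ => ?_)
  rw [Finset.sum_powersetCard x Finset.univ (Cmat m), Finset.card_univ, Fintype.card_fin,
    smul_eq_mul]

end assembly

end AUX

/-- `a_{m+r+1,r} = Σ_{x=0}^{2m} C(r, x) · c_{m,x}` for all `m, r ≥ 0`. -/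
theorem statement4 (m r : ℕ) :
    Amat (m + r + 1) r = ∑ x ∈ Finset.range (2 * m + 1), Nat.choose r x * Cmat m x := by
  rw [amat_eq_sum, sum_over_sets]
  have h1 : ∑ x ∈ Finset.range (r + 1), r.choose x * Cmat m x
      = ∑ x ∈ Finset.range (max (r + 1) (2 * m + 1)), r.choose x * Cmat m x := by
    apply Finset.sum_subset (Finset.range_subset_range.2 (le_max_left _ _))
    intro x _ hx
    rw [Finset.mem_range, not_lt] at hx
    rw [Nat.choose_eq_zero_of_lt (by omega), zero_mul]
  have h2 : ∑ x ∈ Finset.range (2 * m + 1), r.choose x * Cmat m x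
      = ∑ x ∈ Finset.range (max (r + 1) (2 * m + 1)), r.choose x * Cmat m x := by
    apply Finset.sum_subset (Finset.range_subset_range.2 (le_max_right _ _))
    intro x _ hx
    rw [Finset.mem_range, not_lt] at hx
    rw [cmat_eq_zero (by omega), mul_zero]
  rw [h1, ← h2]
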